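/- Per-episode regret of the optimistic policy: suppose the true kernel P satisfies ‖P(·|s,a) − P̂(·|s,a)‖₁ ≤ d for all (s,a) ∈ S × A, and let P̃ ∈ M(P̂,d) (with constant width d) and policy π̃ be optimistic outputs of extended value iteration, i.e., V^{P̃,π̃}_h(s) = Ṽ_h(s) for all h, s. Then for every state s ∈ S, V*_1(s) − V^{P,π̃}_1(s) ≤ Ṽ_1(s) − V^{P,π̃}_1(s) ≤ (d/2) · H · (H − 1), where V* is the optimal value function of the true MDP (S, A, H, P, r). -/

import Mathlib

/-- Value of policy `π` in the finite-horizon MDP `(S, A, H, P, r)` with `j` steps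
remaining; the value `V^π_h` at step `h ∈ {1,…,H+1}` is `polVal H P r π (H + 1 - h)`. -/
noncomputable def polVal {S A : Type*} [Fintype S] (H : ℕ) (P : S → A → S → ℝ)
    (r : S → A → ℝ) (π : S → ℕ → A) : ℕ → S → ℝ
  | 0, _ => 0
  | j + 1, s =>
      r s (π s (H - j)) + ∑ s' : S, P s (π s (H - j)) s' * polVal H P r π j s'

/-- `Vpi H P r π h s = V^π_h(s)`, the value function of policy `π`, defined by backward
induction: `V^π_{H+1}(s) = 0` and `V^π_h(s) = r(s,π(s,h)) + ∑_{s'} P(s'|s,π(s,h)) V^π_{h+1}(s')`. -/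
noncomputable def Vpi {S A : Type*} [Fintype S] (H : ℕ) (P : S → A → S → ℝ)
    (r : S → A → ℝ) (π : S → ℕ → A) (h : ℕ) (s : S) : ℝ :=
  polVal H P r π (H + 1 - h) s

/-- Optimal value function `V*_h(s) = sup_π V^π_h(s)`. -/
noncomputable def Vstar {S A : Type*} [Fintype S] (H : ℕ) (P : S → A → S → ℝ)
    (r : S → A → ℝ) (h : ℕ) (s : S) : ℝ :=
  ⨆ π : S → ℕ → A, Vpi H P r π h s

/-- `q` is a probability vector on the finite set `S`. -/
def IsProbVec {S : Type*} [Fintype S] (q : S → ℝ) : Prop :=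
  (∀ s, 0 ≤ q s) ∧ ∑ s : S, q s = 1

/-- `P'` belongs to the plausible kernel set `M(P̂, d)`: every row `P'(·|s,a)` is a
probability vector within `ℓ¹`-distance `d(s,a)` of the empirical row `P̂(·|s,a)`. -/
def IsPlausible {S A : Type*} [Fintype S] (Phat : S → A → S → ℝ) (d : S → A → ℝ)
    (P' : S → A → S → ℝ) : Prop :=
  ∀ s a, IsProbVec (P' s a) ∧ ∑ s' : S, |P' s a s' - Phat s a s'| ≤ d s a

/-- Inner maximization of extended value iteration:
`max { ∑_{s'} q(s') W(s') : q ∈ Δ(S), ‖q − p̂‖₁ ≤ d }`. -/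
noncomputable def innerOpt {S : Type*} [Fintype S] (phat : S → ℝ) (d : ℝ)
    (W : S → ℝ) : ℝ :=
  sSup { x : ℝ | ∃ q : S → ℝ, IsProbVec q ∧ (∑ s : S, |q s - phat s| ≤ d) ∧
    x = ∑ s : S, q s * W s }

/-- Optimistic value of extended value iteration with `j` steps remaining;
the optimistic value `Ṽ_h` at step `h ∈ {1,…,H+1}` is `optVal H Phat d r (H + 1 - h)`. -/
noncomputable def optVal {S A : Type*} [Fintype S] [Fintype A] (H : ℕ)
    (Phat : S → A → S → ℝ) (d : S → A → ℝ) (r : S → A → ℝ) : ℕ → S → ℝ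
  | 0, _ => 0
  | j + 1, s =>
      ⨆ a : A, (r s a + innerOpt (Phat s a) (d s a) (optVal H Phat d r j))

/-- `Vtilde H Phat d r h s = Ṽ_h(s)`, the optimistic value function of finite-horizon
extended value iteration: `Ṽ_{H+1}(s) = 0` and
`Ṽ_h(s) = max_{a} [ r(s,a) + max { ∑_{s'} q(s') Ṽ_{h+1}(s') : q ∈ Δ(S), ‖q − P̂(·|s,a)‖₁ ≤ d(s,a) } ]`. -/
noncomputable def Vtilde {S A : Type*} [Fintype S] [Fintype A] (H : ℕ)
    (Phat : S → A → S → ℝ) (d : S → A → ℝ) (r : S → A → ℝ) (h : ℕ) (s : S) : ℝ :=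
  optVal H Phat d r (H + 1 - h) s

lemma le_innerOpt {S : Type*} [Fintype S] (phat : S → ℝ) (d : ℝ) (W : S → ℝ)
    (q : S → ℝ) (hq : IsProbVec q) (hqd : ∑ s : S, |q s - phat s| ≤ d) :
    ∑ s : S, q s * W s ≤ innerOpt phat d W := by
  apply le_csSup
  · refine ⟨∑ s : S, |W s|, ?_⟩
    rintro x ⟨p, hp, hpd, rfl⟩
    apply Finset.sum_le_sum
    intro s _
    calc p s * W s ≤ p s * |W s| :=
          mul_le_mul_of_nonneg_left (le_abs_self _) (hp.1 s)
      _ ≤ 1 * |W s| := by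
          apply mul_le_mul_of_nonneg_right _ (abs_nonneg _)
          calc p s ≤ ∑ s' : S, p s' :=
                Finset.single_le_sum (fun s' _ => hp.1 s') (Finset.mem_univ s)
            _ = 1 := hp.2
      _ = |W s| := one_mul _
  · exact ⟨q, hq, hqd, rfl⟩

lemma sum_sub_mul_le {S : Type*} [Fintype S] [Nonempty S] (q p W : S → ℝ) (d c : ℝ)
    (hq : ∑ s : S, q s = 1) (hp : ∑ s : S, p s = 1)
    (hd : ∑ s : S, |q s - p s| ≤ 2 * d)
    (hW : ∀ s, 0 ≤ W s ∧ W s ≤ c) :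
    ∑ s : S, q s * W s - ∑ s : S, p s * W s ≤ d * c := by
  have key : ∑ s : S, q s * W s - ∑ s : S, p s * W s
      = ∑ s : S, (q s - p s) * (W s - c / 2) := by
    simp only [sub_mul, mul_sub, Finset.sum_sub_distrib]
    rw [← Finset.sum_mul, ← Finset.sum_mul, hq, hp]
    ring
  rw [key]
  calc ∑ s : S, (q s - p s) * (W s - c / 2)
      ≤ ∑ s : S, |q s - p s| * (c / 2) := by
        apply Finset.sum_le_sum
        intro s _
        calc (q s - p s) * (W s - c / 2) ≤ |(q s - p s) * (W s - c / 2)| := le_abs_self _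
          _ = |q s - p s| * |W s - c / 2| := abs_mul _ _
          _ ≤ |q s - p s| * (c / 2) := by
              apply mul_le_mul_of_nonneg_left _ (abs_nonneg _)
              rw [abs_le]
              have := hW s
              constructor <;> linarith
    _ = (∑ s : S, |q s - p s|) * (c / 2) := (Finset.sum_mul ..).symm
    _ ≤ 2 * d * (c / 2) := by
        apply mul_le_mul_of_nonneg_right hd
        have hs := hW (Classical.arbitrary S)
        linarith
    _ = d * c := by ring

lemma polVal_bounds {S A : Type*} [Fintype S] (H : ℕ) (P : S → A → S → ℝ)
    (hP : ∀ s a, IsProbVec (P s a)) (r : S → A → ℝ)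
    (hr : ∀ s a, r s a ∈ Set.Icc (0 : ℝ) 1) (π : S → ℕ → A) :
    ∀ j s, 0 ≤ polVal H P r π j s ∧ polVal H P r π j s ≤ (j : ℝ) := by
  intro j
  induction j with
  | zero => intro s; simp [polVal]
  | succ j ih =>
    intro s
    set a := π s (H - j)
    have hsum0 : 0 ≤ ∑ s' : S, P s a s' * polVal H P r π j s' :=
      Finset.sum_nonneg fun s' _ => mul_nonneg ((hP s a).1 s') (ih s').1
    have hsum1 : ∑ s' : S, P s a s' * polVal H P r π j s' ≤ (j : ℝ) := by
      calc ∑ s' : S, P s a s' * polVal H P r π j s'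
          ≤ ∑ s' : S, P s a s' * (j : ℝ) :=
            Finset.sum_le_sum fun s' _ =>
              mul_le_mul_of_nonneg_left (ih s').2 ((hP s a).1 s')
        _ = (j : ℝ) := by rw [← Finset.sum_mul, (hP s a).2, one_mul]
    have hra := hr s a
    constructor
    · simp only [polVal]
      have := hra.1
      linarith
    · simp only [polVal]
      push_cast
      have := hra.2
      linarith

lemma polVal_le_optVal {S A : Type*} [Fintype S] [Fintype A] (H : ℕ)
    (P : S → A → S → ℝ) (Phat : S → A → S → ℝ) (d : ℝ)
    (hP : ∀ s a, IsProbVec (P s a))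
    (hin : ∀ s a, ∑ s' : S, |P s a s' - Phat s a s'| ≤ d)
    (r : S → A → ℝ) (π : S → ℕ → A) :
    ∀ j s, polVal H P r π j s ≤ optVal H Phat (fun _ _ => d) r j s := by
  intro j
  induction j with
  | zero => intro s; simp [polVal, optVal]
  | succ j ih =>
    intro s
    set a := π s (H - j)
    calc polVal H P r π (j + 1) s
        = r s a + ∑ s' : S, P s a s' * polVal H P r π j s' := rfl
      _ ≤ r s a + ∑ s' : S, P s a s' * optVal H Phat (fun _ _ => d) r j s' := by
          gcongr with s' _
          exacts [(hP s a).1 s', ih s']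
      _ ≤ r s a + innerOpt (Phat s a) d (optVal H Phat (fun _ _ => d) r j) :=
          add_le_add_right (le_innerOpt _ _ _ _ (hP s a) (hin s a)) _
      _ ≤ ⨆ a' : A, (r s a' + innerOpt (Phat s a') d (optVal H Phat (fun _ _ => d) r j)) :=
          le_ciSup (f := fun a' : A => r s a' + innerOpt (Phat s a') d (optVal H Phat (fun _ _ => d) r j)) (Set.finite_range _).bddAbove a
      _ = optVal H Phat (fun _ _ => d) r (j + 1) s := rfl

lemma polVal_diff {S A : Type*} [Fintype S] [Nonempty S] (H : ℕ)
    (Pt P : S → A → S → ℝ) (d : ℝ) (hd : 0 ≤ d)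
    (hPt : ∀ s a, IsProbVec (Pt s a)) (hP : ∀ s a, IsProbVec (P s a))
    (hl1 : ∀ s a, ∑ s' : S, |Pt s a s' - P s a s'| ≤ 2 * d)
    (r : S → A → ℝ) (hr : ∀ s a, r s a ∈ Set.Icc (0 : ℝ) 1) (π : S → ℕ → A) :
    ∀ j s, polVal H Pt r π j s - polVal H P r π j s ≤ d * j * (j - 1) / 2 := by
  intro j
  induction j with
  | zero => intro s; simp [polVal]
  | succ j ih =>
    intro s
    set a := π s (H - j)
    set Wt := polVal H Pt r π j
    set W := polVal H P r π j
    have h1 : ∑ s' : S, Pt s a s' * Wt s' - ∑ s' : S, P s a s' * Wt s' ≤ d * j := by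
      have := sum_sub_mul_le (Pt s a) (P s a) Wt d (j : ℝ)
        (hPt s a).2 (hP s a).2 (hl1 s a)
        (fun s' => polVal_bounds H Pt hPt r hr π j s')
      exact this
    have h2 : ∑ s' : S, P s a s' * Wt s' - ∑ s' : S, P s a s' * W s'
        ≤ d * j * (j - 1) / 2 := by
      have hb : d * (j : ℝ) * ((j : ℝ) - 1) / 2 = d * (j : ℝ) * ((j : ℝ) - 1) / 2 := rfl
      calc ∑ s' : S, P s a s' * Wt s' - ∑ s' : S, P s a s' * W s'
          = ∑ s' : S, P s a s' * (Wt s' - W s') := by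
            rw [← Finset.sum_sub_distrib]; congr 1; ext s'; ring
        _ ≤ ∑ s' : S, P s a s' * (d * j * (j - 1) / 2) :=
            Finset.sum_le_sum fun s' _ =>
              mul_le_mul_of_nonneg_left (ih s') ((hP s a).1 s')
        _ = d * j * (j - 1) / 2 := by rw [← Finset.sum_mul, (hP s a).2, one_mul]
    have hj : (0:ℝ) ≤ j := Nat.cast_nonneg j
    calc polVal H Pt r π (j + 1) s - polVal H P r π (j + 1) s
        = (∑ s' : S, Pt s a s' * Wt s') - ∑ s' : S, P s a s' * W s' := by
          simp only [polVal]; ring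
      _ ≤ d * j + d * j * (j - 1) / 2 := by linarith
      _ ≤ d * (j + 1 : ℕ) * ((j + 1 : ℕ) - 1) / 2 := by push_cast; nlinarith

/-- **Per-episode regret of the optimistic policy.** Suppose the true kernel `P`
satisfies `‖P(·|s,a) − P̂(·|s,a)‖₁ ≤ d` for all `(s,a)` (constant width `d`), and let
`P̃ ∈ M(P̂,d)` and policy `π̃` be optimistic outputs of extended value iteration, i.e.
`V^{P̃,π̃}_h(s) = Ṽ_h(s)` for all `h ∈ {1,…,H+1}` and `s`. Then for every state `s`,
`V*_1(s) − V^{P,π̃}_1(s) ≤ Ṽ_1(s) − V^{P,π̃}_1(s) ≤ (d/2) · H · (H − 1)`. -/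
theorem per_episode_regret_of_optimistic_policy {S A : Type*}
    [Fintype S] [Nonempty S] [Fintype A] [Nonempty A]
    (H : ℕ) (hH : 1 ≤ H)
    (P : S → A → S → ℝ) (hP : ∀ s a, IsProbVec (P s a))
    (Phat : S → A → S → ℝ) (hPhat : ∀ s a, IsProbVec (Phat s a))
    (d : ℝ) (hd : 0 ≤ d)
    (hin : ∀ s a, ∑ s' : S, |P s a s' - Phat s a s'| ≤ d)
    (r : S → A → ℝ) (hr : ∀ s a, r s a ∈ Set.Icc (0 : ℝ) 1)
    (Ptilde : S → A → S → ℝ) (πtilde : S → ℕ → A)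
    (hPt : IsPlausible Phat (fun _ _ => d) Ptilde)
    (hopt : ∀ h ∈ Finset.Icc 1 (H + 1), ∀ s : S,
      Vpi H Ptilde r πtilde h s = Vtilde H Phat (fun _ _ => d) r h s) :
    ∀ s : S,
      Vstar H P r 1 s - Vpi H P r πtilde 1 s
          ≤ Vtilde H Phat (fun _ _ => d) r 1 s - Vpi H P r πtilde 1 s ∧
        Vtilde H Phat (fun _ _ => d) r 1 s - Vpi H P r πtilde 1 s
          ≤ d / 2 * (H : ℝ) * ((H : ℝ) - 1) := by
  intro s
  have hH1 : H + 1 - 1 = H := by omega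
  constructor
  · have hVV : Vstar H P r 1 s ≤ Vtilde H Phat (fun _ _ => d) r 1 s := by
      apply ciSup_le
      intro π
      unfold Vpi Vtilde
      rw [hH1]
      exact polVal_le_optVal H P Phat d hP hin r π H s
    linarith
  · have h1 : Vpi H Ptilde r πtilde 1 s = Vtilde H Phat (fun _ _ => d) r 1 s :=
      hopt 1 (Finset.mem_Icc.mpr ⟨le_refl 1, by omega⟩) s
    rw [← h1]
    unfold Vpi
    rw [hH1]
    have hl1 : ∀ s a, ∑ s' : S, |Ptilde s a s' - P s a s'| ≤ 2 * d := by
      intro s a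
      calc ∑ s' : S, |Ptilde s a s' - P s a s'|
          ≤ ∑ s' : S, (|Ptilde s a s' - Phat s a s'| + |P s a s' - Phat s a s'|) := by
            apply Finset.sum_le_sum
            intro s' _
            have : Ptilde s a s' - P s a s'
                = (Ptilde s a s' - Phat s a s') - (P s a s' - Phat s a s') := by ring
            rw [this]
            exact abs_sub _ _
        _ = (∑ s' : S, |Ptilde s a s' - Phat s a s'|)
              + ∑ s' : S, |P s a s' - Phat s a s'| := Finset.sum_add_distrib
        _ ≤ d + d := add_le_add (hPt s a).2 (hin s a)
        _ = 2 * d := by ring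
    have := polVal_diff H Ptilde P d hd (fun s a => (hPt s a).1) hP hl1 r hr πtilde H s
    calc polVal H Ptilde r πtilde H s - polVal H P r πtilde H s
        ≤ d * H * ((H : ℝ) - 1) / 2 := this
      _ = d / 2 * (H : ℝ) * ((H : ℝ) - 1) := by ring
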